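/- Let A be a closed operator with Riesz projection P associated to a circle {|μ − λ| = r} ⊂ ρ(A), and let P̄ = 1 − P. Then for |z − λ| < r, the operator A − z restricted to Ran P̄ ∩ D(A) is invertible, and its inverse composed with P̄ equals R̂_z = −(1/2πi) ∮_{|μ−λ|=r} (z − μ)⁻¹ (A − μ)⁻¹ dμ; in particular (A − z) R̂_z = P̄ and R̂_z (A − z) ⊆ P̄, and R̂_z P = P R̂_z = 0. -/

import Mathlib

open MeasureTheory

/-- The Riesz projection `P = -(2πi)⁻¹ ∮_{|μ-λ|=r} (A-μ)⁻¹ dμ`, expressed through the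
resolvent family `R μ = (A - μ)⁻¹` and the parametrization `μ = λ + r e^{iθ}`. -/
noncomputable def rieszProjection {H : Type*} [NormedAddCommGroup H]
    [InnerProductSpace ℂ H] [CompleteSpace H]
    (R : ℂ → H →L[ℂ] H) (lam : ℂ) (r : ℝ) : H →L[ℂ] H :=
  (-(2 * (Real.pi : ℂ) * Complex.I)⁻¹) •
    ∫ θ in (0:ℝ)..(2 * Real.pi),
      (Complex.I * r * Complex.exp (θ * Complex.I)) •
        R (lam + r * Complex.exp (θ * Complex.I))

/-- The reduced resolvent `R̂_z = -(2πi)⁻¹ ∮_{|μ-λ|=r} (z-μ)⁻¹ (A-μ)⁻¹ dμ`. -/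
noncomputable def reducedResolvent {H : Type*} [NormedAddCommGroup H]
    [InnerProductSpace ℂ H] [CompleteSpace H]
    (R : ℂ → H →L[ℂ] H) (lam : ℂ) (r : ℝ) (z : ℂ) : H →L[ℂ] H :=
  (-(2 * (Real.pi : ℂ) * Complex.I)⁻¹) •
    ∫ θ in (0:ℝ)..(2 * Real.pi),
      ((z - (lam + r * Complex.exp (θ * Complex.I)))⁻¹ *
          (Complex.I * r * Complex.exp (θ * Complex.I))) •
        R (lam + r * Complex.exp (θ * Complex.I))

namespace RRProof

open Metric


variable {H : Type*} [NormedAddCommGroup H] [InnerProductSpace ℂ H] [CompleteSpace H]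

/-- `T` is a bounded, everywhere-defined two-sided inverse of `A - μ`. -/
structure IsRes (A : H →ₗ.[ℂ] H) (μ : ℂ) (T : H →L[ℂ] H) : Prop where
  mem : ∀ y : H, T y ∈ A.domain
  inv : ∀ (y : H) (h : T y ∈ A.domain), A ⟨T y, h⟩ - μ • T y = y
  inv' : ∀ (x : H) (hx : x ∈ A.domain), T (A ⟨x, hx⟩ - μ • x) = x

theorem IsRes.unique {A : H →ₗ.[ℂ] H} {μ : ℂ} {T S : H →L[ℂ] H}
    (h1 : IsRes A μ T) (h2 : IsRes A μ S) : T = S := by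
  ext y
  have h := h1.inv y (h1.mem y)
  have h' := h2.inv' (T y) (h1.mem y)
  rw [h] at h'
  exact h'.symm

theorem IsRes.res_id {A : H →ₗ.[ℂ] H} {μ ν : ℂ} {T S : H →L[ℂ] H}
    (hT : IsRes A μ T) (hS : IsRes A ν S) (hne : μ ≠ ν) (y : H) :
    T (S y) = (ν - μ)⁻¹ • (S y - T y) := by
  have hmem := hS.mem y
  have h1 : A ⟨S y, hmem⟩ - ν • S y = y := hS.inv y hmem
  have h2 : T (A ⟨S y, hmem⟩ - μ • S y) = S y := hT.inv' (S y) hmem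
  have h3 : A ⟨S y, hmem⟩ - μ • S y = (A ⟨S y, hmem⟩ - ν • S y) + (ν - μ) • S y := by
    module
  rw [h1] at h3
  rw [h3, map_add, T.map_smul] at h2
  have hν : ν - μ ≠ 0 := sub_ne_zero.mpr hne.symm
  have h4 : (ν - μ) • T (S y) = S y - T y := eq_sub_of_add_eq' h2
  rw [← h4, inv_smul_smul₀ hν]

theorem IsRes.extend {A : H →ₗ.[ℂ] H} {μ₀ : ℂ} {T : H →L[ℂ] H}
    (hT : IsRes A μ₀ T) {μ : ℂ} (hs : ‖(μ - μ₀) • T‖ < 1) :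
    IsRes A μ (T * ↑(Units.oneSub ((μ - μ₀) • T) hs)⁻¹) := by
  set s : H →L[ℂ] H := (μ - μ₀) • T with hs_def
  set u : (H →L[ℂ] H)ˣ := Units.oneSub s hs with hu_def
  have hval : (↑u : H →L[ℂ] H) = 1 - s := rfl
  have hcs : Commute T s := (Commute.refl T).smul_right _
  have hcomm : Commute T (↑u⁻¹ : H →L[ℂ] H) := by
    refine Commute.units_inv_right ?_
    rw [hval]
    exact ((Commute.one_right T).sub_right hcs)
  have hui : (↑u⁻¹ : H →L[ℂ] H) * (1 - s) = 1 := by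
    rw [← hval]; exact u.inv_mul
  have hiu : (1 - s) * (↑u⁻¹ : H →L[ℂ] H) = 1 := by
    rw [← hval]; exact u.mul_inv
  constructor
  · intro y
    simp only [ContinuousLinearMap.mul_apply]
    exact hT.mem _
  · intro y h
    simp only [ContinuousLinearMap.mul_apply] at h ⊢
    have key : A ⟨T ((↑u⁻¹ : H →L[ℂ] H) y), h⟩ - μ₀ • T ((↑u⁻¹ : H →L[ℂ] H) y)
        = (↑u⁻¹ : H →L[ℂ] H) y := hT.inv _ h
    have goal_eq : A ⟨T ((↑u⁻¹ : H →L[ℂ] H) y), h⟩ - μ • T ((↑u⁻¹ : H →L[ℂ] H) y)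
        = (A ⟨T ((↑u⁻¹ : H →L[ℂ] H) y), h⟩ - μ₀ • T ((↑u⁻¹ : H →L[ℂ] H) y))
          - (μ - μ₀) • T ((↑u⁻¹ : H →L[ℂ] H) y) := by module
    rw [goal_eq, key]
    have h4 : ((1 - s) * (↑u⁻¹ : H →L[ℂ] H)) y = y := by rw [hiu]; rfl
    simpa only [ContinuousLinearMap.mul_apply, ContinuousLinearMap.sub_apply,
      ContinuousLinearMap.one_apply, hs_def, ContinuousLinearMap.smul_apply] using h4
  · intro x hx
    have : T * (↑u⁻¹ : H →L[ℂ] H) = (↑u⁻¹ : H →L[ℂ] H) * T := hcomm.eq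
    rw [this]
    simp only [ContinuousLinearMap.mul_apply]
    have e1 : A ⟨x, hx⟩ - μ • x = (A ⟨x, hx⟩ - μ₀ • x) - (μ - μ₀) • x := by module
    rw [e1, map_sub, T.map_smul, hT.inv' x hx]
    have e2 : x - (μ - μ₀) • T x = (1 - s) x := by
      simp only [hs_def, ContinuousLinearMap.sub_apply, ContinuousLinearMap.one_apply,
        ContinuousLinearMap.smul_apply]
    rw [e2, ← ContinuousLinearMap.mul_apply, hui, ContinuousLinearMap.one_apply]

open Classical in
/-- Global (choice-based) extension of the resolvent. -/
noncomputable def Rext (A : H →ₗ.[ℂ] H) : ℂ → H →L[ℂ] H :=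
  fun μ => if h : ∃ T, IsRes A μ T then h.choose else 0

theorem Rext_isRes {A : H →ₗ.[ℂ] H} {μ : ℂ} (h : ∃ T, IsRes A μ T) :
    IsRes A μ (Rext A μ) := by
  simp only [Rext]
  rw [dif_pos h]
  exact h.choose_spec

theorem Rext_eq {A : H →ₗ.[ℂ] H} {μ : ℂ} {T : H →L[ℂ] H} (hT : IsRes A μ T) :
    Rext A μ = T := (Rext_isRes ⟨T, hT⟩).unique hT

theorem Rext_diffAt {A : H →ₗ.[ℂ] H} {μ₁ : ℂ} (h : ∃ T, IsRes A μ₁ T) :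
    DifferentiableAt ℂ (Rext A) μ₁ := by
  obtain ⟨T, hT⟩ := h
  set δ : ℝ := (‖T‖ + 1)⁻¹ with hδ
  have hδ0 : 0 < δ := by positivity
  have key : ∀ μ ∈ ball μ₁ δ, Rext A μ = T * Ring.inverse (1 - (μ - μ₁) • T) := by
    intro μ hμ
    rw [mem_ball, dist_eq_norm] at hμ
    have hs : ‖(μ - μ₁) • T‖ < 1 := by
      rw [norm_smul]
      have h1 : δ * (‖T‖ + 1) = 1 := inv_mul_cancel₀ (by positivity)
      nlinarith [norm_nonneg T, norm_nonneg (μ - μ₁)]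
    have hext := hT.extend hs
    have hinv : Ring.inverse (1 - (μ - μ₁) • T) = ↑(Units.oneSub ((μ - μ₁) • T) hs)⁻¹ := by
      have hval : (1 - (μ - μ₁) • T) = ↑(Units.oneSub ((μ - μ₁) • T) hs) := rfl
      rw [hval, Ring.inverse_unit]
    rw [hinv]
    exact Rext_eq hext
  have heq : Rext A =ᶠ[nhds μ₁] fun μ => T * Ring.inverse (1 - (μ - μ₁) • T) :=
    Filter.eventuallyEq_of_mem (ball_mem_nhds μ₁ hδ0) key
  rw [heq.differentiableAt_iff]
  have hd1 : DifferentiableAt ℂ (fun μ : ℂ => (1 : H →L[ℂ] H) - (μ - μ₁) • T) μ₁ :=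
    (differentiableAt_const _).sub ((differentiableAt_id.sub_const _).smul_const T)
  have hd2 : DifferentiableAt ℂ (fun μ : ℂ => Ring.inverse ((1 : H →L[ℂ] H) - (μ - μ₁) • T)) μ₁ := by
    apply hd1.inverse
    simp
  exact (differentiableAt_const T).mul hd2

section Chunk2

open Complex intervalIntegral

theorem circleIntegral_eq_intervalIntegral {E : Type*} [NormedAddCommGroup E] [NormedSpace ℂ E]
    (f : ℂ → E) (c : ℂ) (R : ℝ) :
    (∮ ζ in C(c, R), f ζ) =
      ∫ θ in (0:ℝ)..(2 * Real.pi),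
        (Complex.I * R * Complex.exp (θ * Complex.I)) • f (c + R * Complex.exp (θ * Complex.I)) := by
  rw [circleIntegral]
  refine intervalIntegral.integral_congr fun θ _ => ?_
  rw [deriv_circleMap]
  have h1 : circleMap c R θ = c + R * Complex.exp (θ * Complex.I) := rfl
  have h2 : circleMap 0 R θ * Complex.I = Complex.I * R * Complex.exp (θ * Complex.I) := by
    simp only [circleMap, zero_add]; ring
  rw [h1, h2]

theorem point_ne_circleMap {c w : ℂ} {R : ℝ} (hR : 0 ≤ R) (hw : ‖w - c‖ ≠ R)
    (θ : ℝ) : c + ↑R * Complex.exp (↑θ * Complex.I) - w ≠ 0 := by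
  intro h
  apply hw
  have hwc : w = c + ↑R * Complex.exp (↑θ * Complex.I) := by
    have := sub_eq_zero.mp h; exact this.symm
  have h1 : circleMap c R θ ∈ Metric.sphere c R := circleMap_mem_sphere c hR θ
  rw [mem_sphere_iff_norm] at h1
  rw [hwc]
  simpa [circleMap] using h1

theorem scalar_integral_inside {c w : ℂ} {R : ℝ} (hw : w ∈ Metric.ball c R) :
    (∫ θ in (0:ℝ)..(2 * Real.pi),
        ((c + ↑R * Complex.exp (↑θ * Complex.I)) - w)⁻¹ *
          (Complex.I * ↑R * Complex.exp (↑θ * Complex.I)))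
      = 2 * Real.pi * Complex.I := by
  have h := circleIntegral.integral_sub_inv_of_mem_ball hw
  rw [circleIntegral_eq_intervalIntegral] at h
  rw [← h]
  exact intervalIntegral.integral_congr fun θ _ => by rw [smul_eq_mul]; ring

theorem scalar_integral_inside' {c w : ℂ} {R : ℝ} (hw : w ∈ Metric.ball c R) :
    (∫ θ in (0:ℝ)..(2 * Real.pi),
        (w - (c + ↑R * Complex.exp (↑θ * Complex.I)))⁻¹ *
          (Complex.I * ↑R * Complex.exp (↑θ * Complex.I)))
      = -(2 * Real.pi * Complex.I) := by
  rw [← scalar_integral_inside hw, ← intervalIntegral.integral_neg]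
  refine intervalIntegral.integral_congr fun θ _ => ?_
  rw [show w - (c + ↑R * Complex.exp (↑θ * Complex.I))
      = -((c + ↑R * Complex.exp (↑θ * Complex.I)) - w) by ring, inv_neg]
  ring

theorem scalar_integral_outside {c w : ℂ} {R : ℝ} (hR : 0 ≤ R)
    (hw : w ∉ Metric.closedBall c R) :
    (∫ θ in (0:ℝ)..(2 * Real.pi),
        ((c + ↑R * Complex.exp (↑θ * Complex.I)) - w)⁻¹ *
          (Complex.I * ↑R * Complex.exp (↑θ * Complex.I)))
      = 0 := by
  have hne : ∀ ζ ∈ Metric.closedBall c R, ζ - w ≠ 0 := by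
    intro ζ hζ h
    exact hw (sub_eq_zero.mp h ▸ hζ)
  have h0 : (∮ ζ in C(c, R), (ζ - w)⁻¹) = 0 := by
    refine circleIntegral_eq_zero_of_differentiable_on_off_countable hR Set.countable_empty
      ?_ ?_
    · intro ζ hζ
      exact ((continuousAt_id.sub continuousAt_const).inv₀ (hne ζ hζ)).continuousWithinAt
    · intro ζ hζ
      exact (differentiableAt_id.sub_const w).inv (hne ζ (Metric.ball_subset_closedBall hζ.1))
  rw [circleIntegral_eq_intervalIntegral] at h0
  rw [← h0]
  exact intervalIntegral.integral_congr fun θ _ => by rw [smul_eq_mul]; ring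

set_option maxHeartbeats 1000000 in
theorem scalar_integral_two_poles {c z w : ℂ} {R : ℝ} (hR : 0 < R) (hz : z ∈ Metric.ball c R)
    (hw : w ∈ Metric.ball c R) (hzw : z ≠ w) :
    (∫ θ in (0:ℝ)..(2 * Real.pi),
        ((z - (c + ↑R * Complex.exp (↑θ * Complex.I)))⁻¹ *
          ((c + ↑R * Complex.exp (↑θ * Complex.I)) - w)⁻¹) *
          (Complex.I * ↑R * Complex.exp (↑θ * Complex.I)))
      = 0 := by
  have hzne : ∀ θ : ℝ, c + ↑R * Complex.exp (↑θ * Complex.I) - z ≠ 0 :=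
    point_ne_circleMap hR.le (by rw [mem_ball_iff_norm] at hz; exact ne_of_lt hz)
  have hwne : ∀ θ : ℝ, c + ↑R * Complex.exp (↑θ * Complex.I) - w ≠ 0 :=
    point_ne_circleMap hR.le (by rw [mem_ball_iff_norm] at hw; exact ne_of_lt hw)
  have hcont : Continuous fun θ : ℝ => c + ↑R * Complex.exp (↑θ * Complex.I) := by
    fun_prop
  have hc1 : Continuous fun θ : ℝ =>
      (z - (c + ↑R * Complex.exp (↑θ * Complex.I)))⁻¹ *
        (Complex.I * ↑R * Complex.exp (↑θ * Complex.I)) := by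
    refine Continuous.mul (Continuous.inv₀ (by fun_prop) ?_) (by fun_prop)
    intro θ
    intro h
    exact hzne θ (by rw [show c + ↑R * Complex.exp (↑θ * Complex.I) - z
      = -(z - (c + ↑R * Complex.exp (↑θ * Complex.I))) by ring, h, neg_zero])
  have hc2 : Continuous fun θ : ℝ =>
      ((c + ↑R * Complex.exp (↑θ * Complex.I)) - w)⁻¹ *
        (Complex.I * ↑R * Complex.exp (↑θ * Complex.I)) := by
    exact Continuous.mul (Continuous.inv₀ (by fun_prop) hwne) (by fun_prop)
  have key : ∀ θ : ℝ,
      ((z - (c + ↑R * Complex.exp (↑θ * Complex.I)))⁻¹ *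
          ((c + ↑R * Complex.exp (↑θ * Complex.I)) - w)⁻¹) *
          (Complex.I * ↑R * Complex.exp (↑θ * Complex.I))
        = (z - w)⁻¹ *
            ((z - (c + ↑R * Complex.exp (↑θ * Complex.I)))⁻¹ *
                (Complex.I * ↑R * Complex.exp (↑θ * Complex.I)) +
              ((c + ↑R * Complex.exp (↑θ * Complex.I)) - w)⁻¹ *
                (Complex.I * ↑R * Complex.exp (↑θ * Complex.I))) := by
    intro θ
    set ν := c + ↑R * Complex.exp (↑θ * Complex.I)
    have h1 : ν - z ≠ 0 := hzne θ
    have h2 : ν - w ≠ 0 := hwne θ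
    have h3 : z - ν ≠ 0 := fun h => h1 (by rw [show ν - z = -(z - ν) by ring, h, neg_zero])
    have h4 : z - w ≠ 0 := sub_ne_zero.mpr hzw
    field_simp
    ring
  have step1 : (∫ θ in (0:ℝ)..(2 * Real.pi),
      ((z - (c + ↑R * Complex.exp (↑θ * Complex.I)))⁻¹ *
          ((c + ↑R * Complex.exp (↑θ * Complex.I)) - w)⁻¹) *
          (Complex.I * ↑R * Complex.exp (↑θ * Complex.I)))
      = ∫ θ in (0:ℝ)..(2 * Real.pi), (z - w)⁻¹ *
          ((z - (c + ↑R * Complex.exp (↑θ * Complex.I)))⁻¹ *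
              (Complex.I * ↑R * Complex.exp (↑θ * Complex.I)) +
            ((c + ↑R * Complex.exp (↑θ * Complex.I)) - w)⁻¹ *
              (Complex.I * ↑R * Complex.exp (↑θ * Complex.I))) :=
    intervalIntegral.integral_congr fun θ _ => key θ
  rw [step1, intervalIntegral.integral_const_mul,
    intervalIntegral.integral_add (hc1.intervalIntegrable _ _) (hc2.intervalIntegrable _ _),
    scalar_integral_inside' hz, scalar_integral_inside hw]
  ring

end Chunk2


section Chunk3

variable {H : Type*} [NormedAddCommGroup H] [InnerProductSpace ℂ H] [CompleteSpace H]

theorem integral_mem_graph {A : H →ₗ.[ℂ] H} (hclosed : IsClosed (A.graph : Set (H × H)))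
    {a b : ℝ} {f g : ℝ → H} (hfg : Continuous fun θ => ((f θ, g θ) : H × H))
    (hmem : ∀ θ, ((f θ, g θ) : H × H) ∈ A.graph) :
    ∃ h : (∫ θ in a..b, f θ) ∈ A.domain,
      A ⟨∫ θ in a..b, f θ, h⟩ = ∫ θ in a..b, g θ := by
  haveI : CompleteSpace A.graph := hclosed.completeSpace_coe
  set G : ℝ → A.graph := fun θ => ⟨(f θ, g θ), hmem θ⟩ with hG
  have hGc : Continuous G := hfg.subtype_mk _
  have hGi : IntervalIntegrable G MeasureTheory.volume a b := hGc.intervalIntegrable a b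
  have hPi : IntervalIntegrable (fun θ => ((f θ, g θ) : H × H)) MeasureTheory.volume a b :=
    hfg.intervalIntegrable a b
  have hfst : (∫ θ in a..b, ((f θ, g θ) : H × H)).1 = ∫ θ in a..b, f θ := by
    simpa using ((ContinuousLinearMap.fst ℂ H H).intervalIntegral_comp_comm hPi).symm
  have hsnd : (∫ θ in a..b, ((f θ, g θ) : H × H)).2 = ∫ θ in a..b, g θ := by
    simpa using ((ContinuousLinearMap.snd ℂ H H).intervalIntegral_comp_comm hPi).symm
  have h1 : (∫ θ in a..b, (A.graph.subtypeL (G θ) : H × H))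
      = A.graph.subtypeL (∫ θ in a..b, G θ) :=
    A.graph.subtypeL.intervalIntegral_comp_comm hGi
  have h2 : (∫ θ in a..b, ((f θ, g θ) : H × H))
      = ((∫ θ in a..b, G θ : A.graph) : H × H) := h1
  have hmemI : (∫ θ in a..b, ((f θ, g θ) : H × H)) ∈ A.graph := by
    rw [h2]; exact Submodule.coe_mem _
  rw [LinearPMap.mem_graph_iff] at hmemI
  obtain ⟨v, hv1, hv2⟩ := hmemI
  rw [hfst] at hv1
  rw [hsnd] at hv2
  refine ⟨hv1 ▸ v.2, ?_⟩
  have hveq : (⟨∫ θ in a..b, f θ, hv1 ▸ v.2⟩ : A.domain) = v := Subtype.ext hv1.symm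
  rw [hveq, hv2]

end Chunk3

section Chunk4

open Complex intervalIntegral

variable {H : Type*} [NormedAddCommGroup H] [InnerProductSpace ℂ H] [CompleteSpace H]

theorem contR_comp {R : ℂ → H →L[ℂ] H} {lam : ℂ} {r : ℝ} (hr : 0 ≤ r)
    (hcont : ContinuousOn R (Metric.sphere lam r)) :
    Continuous fun θ : ℝ => R (lam + ↑r * Complex.exp (↑θ * Complex.I)) :=
  hcont.comp_continuous (by fun_prop) (fun θ => circleMap_mem_sphere lam hr θ)

theorem rieszProjection_apply {R : ℂ → H →L[ℂ] H} {lam : ℂ} {r : ℝ} (hr : 0 ≤ r)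
    (hcont : ContinuousOn R (Metric.sphere lam r)) (y : H) :
    rieszProjection R lam r y = (-(2 * (Real.pi : ℂ) * Complex.I)⁻¹) •
      ∫ θ in (0:ℝ)..(2 * Real.pi),
        (Complex.I * r * Complex.exp (θ * Complex.I)) •
          R (lam + r * Complex.exp (θ * Complex.I)) y := by
  have hInt : IntervalIntegrable (fun θ : ℝ =>
      (Complex.I * ↑r * Complex.exp (↑θ * Complex.I)) •
        R (lam + ↑r * Complex.exp (↑θ * Complex.I))) MeasureTheory.volume 0 (2 * Real.pi) :=
    (Continuous.smul (by fun_prop : Continuous fun θ : ℝ => Complex.I * ↑r * Complex.exp (↑θ * Complex.I)) (contR_comp hr hcont)).intervalIntegrable _ _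
  rw [rieszProjection, ContinuousLinearMap.smul_apply,
    ContinuousLinearMap.intervalIntegral_apply hInt]
  congr 1

theorem reducedResolvent_apply {R : ℂ → H →L[ℂ] H} {lam : ℂ} {r : ℝ} (hr : 0 ≤ r)
    (hcont : ContinuousOn R (Metric.sphere lam r)) {z : ℂ}
    (hzne : ∀ θ : ℝ, z - (lam + ↑r * Complex.exp (↑θ * Complex.I)) ≠ 0) (y : H) :
    reducedResolvent R lam r z y = (-(2 * (Real.pi : ℂ) * Complex.I)⁻¹) •
      ∫ θ in (0:ℝ)..(2 * Real.pi),
        ((z - (lam + r * Complex.exp (θ * Complex.I)))⁻¹ *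
            (Complex.I * r * Complex.exp (θ * Complex.I))) •
          R (lam + r * Complex.exp (θ * Complex.I)) y := by
  have hInt : IntervalIntegrable (fun θ : ℝ =>
      ((z - (lam + ↑r * Complex.exp (↑θ * Complex.I)))⁻¹ *
          (Complex.I * ↑r * Complex.exp (↑θ * Complex.I))) •
        R (lam + ↑r * Complex.exp (↑θ * Complex.I))) MeasureTheory.volume 0 (2 * Real.pi) := by
    refine (Continuous.smul (Continuous.mul (Continuous.inv₀ (by fun_prop) hzne) (by fun_prop))
      (contR_comp hr hcont)).intervalIntegrable _ _
  rw [reducedResolvent, ContinuousLinearMap.smul_apply,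
    ContinuousLinearMap.intervalIntegral_apply hInt]
  congr 1

theorem z_sub_ne {lam : ℂ} {r : ℝ} {z : ℂ} (hz : ‖z - lam‖ < r) (θ : ℝ) :
    z - (lam + ↑r * Complex.exp (↑θ * Complex.I)) ≠ 0 := by
  have h := point_ne_circleMap (le_of_lt (lt_of_le_of_lt (norm_nonneg _) hz))
    (show ‖z - lam‖ ≠ r from ne_of_lt hz) θ
  intro hc
  apply h
  rw [show lam + ↑r * Complex.exp (↑θ * Complex.I) - z
    = -(z - (lam + ↑r * Complex.exp (↑θ * Complex.I))) by ring, hc, neg_zero]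

end Chunk4



section Chunk5

open Complex intervalIntegral MeasureTheory

variable {H : Type*} [NormedAddCommGroup H] [InnerProductSpace ℂ H] [CompleteSpace H]

theorem main12 (A : H →ₗ.[ℂ] H) (hclosed : IsClosed (A.graph : Set (H × H)))
    (lam : ℂ) (r : ℝ) (hr : 0 < r) (R : ℂ → H →L[ℂ] H)
    (hRcont : ContinuousOn R (Metric.sphere lam r))
    (hRmem : ∀ μ ∈ Metric.sphere lam r, ∀ y : H, R μ y ∈ A.domain)
    (hRinv : ∀ μ ∈ Metric.sphere lam r, ∀ (y : H) (h : R μ y ∈ A.domain),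
        A ⟨R μ y, h⟩ - μ • R μ y = y)
    (z : ℂ) (hz : ‖z - lam‖ < r) (y : H) :
    ∃ h : reducedResolvent R lam r z y ∈ A.domain,
      A ⟨reducedResolvent R lam r z y, h⟩ - z • reducedResolvent R lam r z y
        = y - rieszProjection R lam r y := by
  have hzθ : ∀ θ : ℝ, z - (lam + r * Complex.exp (θ * Complex.I)) ≠ 0 := z_sub_ne hz
  have hsphere : ∀ θ : ℝ, (lam + r * Complex.exp (θ * Complex.I)) ∈ Metric.sphere lam r :=
    fun θ => circleMap_mem_sphere lam hr.le θ
  have hrepr := reducedResolvent_apply hr.le hRcont hzθ y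
  have hPrepr := rieszProjection_apply hr.le hRcont y
  have hcc : Continuous fun θ : ℝ => ((z - (lam + r * Complex.exp (θ * Complex.I)))⁻¹ * (Complex.I * r * Complex.exp (θ * Complex.I))) :=
    (Continuous.inv₀ (by fun_prop) hzθ).mul (by fun_prop)
  have hcw : Continuous fun θ : ℝ => R (lam + r * Complex.exp (θ * Complex.I)) y :=
    (contR_comp hr.le hRcont).clm_apply continuous_const
  have hgraph : ∀ θ : ℝ, ((((z - (lam + r * Complex.exp (θ * Complex.I)))⁻¹ * (Complex.I * r * Complex.exp (θ * Complex.I))) • R (lam + r * Complex.exp (θ * Complex.I)) y, ((z - (lam + r * Complex.exp (θ * Complex.I)))⁻¹ * (Complex.I * r * Complex.exp (θ * Complex.I))) • (y + (lam + r * Complex.exp (θ * Complex.I)) • R (lam + r * Complex.exp (θ * Complex.I)) y)) : H × H) ∈ A.graph := by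
    intro θ
    rw [LinearPMap.mem_graph_iff]
    refine ⟨((z - (lam + r * Complex.exp (θ * Complex.I)))⁻¹ * (Complex.I * r * Complex.exp (θ * Complex.I))) • ⟨R (lam + r * Complex.exp (θ * Complex.I)) y, hRmem _ (hsphere θ) y⟩, rfl, ?_⟩
    rw [A.map_smul]
    have h5 := hRinv _ (hsphere θ) y (hRmem _ (hsphere θ) y)
    rw [sub_eq_iff_eq_add] at h5
    rw [h5]
  have hpair : Continuous fun θ : ℝ => ((((z - (lam + r * Complex.exp (θ * Complex.I)))⁻¹ * (Complex.I * r * Complex.exp (θ * Complex.I))) • R (lam + r * Complex.exp (θ * Complex.I)) y, ((z - (lam + r * Complex.exp (θ * Complex.I)))⁻¹ * (Complex.I * r * Complex.exp (θ * Complex.I))) • (y + (lam + r * Complex.exp (θ * Complex.I)) • R (lam + r * Complex.exp (θ * Complex.I)) y)) : H × H) := by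
    refine Continuous.prodMk (hcc.smul hcw) (hcc.smul ?_)
    exact continuous_const.add ((by fun_prop : Continuous fun θ : ℝ => (lam + r * Complex.exp (θ * Complex.I))).smul hcw)
  obtain ⟨hmem, hAeq⟩ := integral_mem_graph (a := 0) (b := (2 * Real.pi)) hclosed hpair hgraph
  have hmem' : reducedResolvent R lam r z y ∈ A.domain := by
    rw [hrepr]; exact A.domain.smul_mem _ hmem
  refine ⟨hmem', ?_⟩
  have hsub : (⟨reducedResolvent R lam r z y, hmem'⟩ : A.domain)
      = (-(2 * (Real.pi : ℂ) * Complex.I)⁻¹) • (⟨∫ θ in (0:ℝ)..(2 * Real.pi), ((z - (lam + r * Complex.exp (θ * Complex.I)))⁻¹ * (Complex.I * r * Complex.exp (θ * Complex.I))) • R (lam + r * Complex.exp (θ * Complex.I)) y, hmem⟩ : A.domain) := by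
    refine Subtype.ext ?_
    rw [Submodule.coe_smul]
    exact hrepr
  have hAval : A ⟨reducedResolvent R lam r z y, hmem'⟩
      = (-(2 * (Real.pi : ℂ) * Complex.I)⁻¹) • ∫ θ in (0:ℝ)..(2 * Real.pi), ((z - (lam + r * Complex.exp (θ * Complex.I)))⁻¹ * (Complex.I * r * Complex.exp (θ * Complex.I))) • (y + (lam + r * Complex.exp (θ * Complex.I)) • R (lam + r * Complex.exp (θ * Complex.I)) y) := by
    rw [hsub, A.map_smul, hAeq]
  rw [hAval, hrepr]
  have hIf : IntervalIntegrable (fun θ : ℝ => ((z - (lam + r * Complex.exp (θ * Complex.I)))⁻¹ * (Complex.I * r * Complex.exp (θ * Complex.I))) • R (lam + r * Complex.exp (θ * Complex.I)) y) volume 0 (2 * Real.pi) :=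
    (hcc.smul hcw).intervalIntegrable _ _
  have hIg : IntervalIntegrable (fun θ : ℝ => ((z - (lam + r * Complex.exp (θ * Complex.I)))⁻¹ * (Complex.I * r * Complex.exp (θ * Complex.I))) • (y + (lam + r * Complex.exp (θ * Complex.I)) • R (lam + r * Complex.exp (θ * Complex.I)) y)) volume 0 (2 * Real.pi) :=
    (hcc.smul (continuous_const.add ((by fun_prop : Continuous fun θ : ℝ => (lam + r * Complex.exp (θ * Complex.I))).smul
      hcw))).intervalIntegrable _ _
  have hIzf : IntervalIntegrable (fun θ : ℝ => z • (((z - (lam + r * Complex.exp (θ * Complex.I)))⁻¹ * (Complex.I * r * Complex.exp (θ * Complex.I))) • R (lam + r * Complex.exp (θ * Complex.I)) y)) volume 0 (2 * Real.pi) :=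
    ((continuous_const.smul (hcc.smul hcw)) :
      Continuous fun θ : ℝ => z • (((z - (lam + r * Complex.exp (θ * Complex.I)))⁻¹ * (Complex.I * r * Complex.exp (θ * Complex.I))) • R (lam + r * Complex.exp (θ * Complex.I)) y)).intervalIntegrable _ _
  have hIcy : IntervalIntegrable (fun θ : ℝ => ((z - (lam + r * Complex.exp (θ * Complex.I)))⁻¹ * (Complex.I * r * Complex.exp (θ * Complex.I))) • y) volume 0 (2 * Real.pi) :=
    (hcc.smul continuous_const).intervalIntegrable _ _
  have hIqw : IntervalIntegrable (fun θ : ℝ => (Complex.I * r * Complex.exp (θ * Complex.I)) • R (lam + r * Complex.exp (θ * Complex.I)) y) volume 0 (2 * Real.pi) :=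
    ((by fun_prop : Continuous fun θ : ℝ => (Complex.I * r * Complex.exp (θ * Complex.I))).smul hcw).intervalIntegrable _ _
  have e1 : z • ((-(2 * (Real.pi : ℂ) * Complex.I)⁻¹) • ∫ θ in (0:ℝ)..(2 * Real.pi), ((z - (lam + r * Complex.exp (θ * Complex.I)))⁻¹ * (Complex.I * r * Complex.exp (θ * Complex.I))) • R (lam + r * Complex.exp (θ * Complex.I)) y)
      = (-(2 * (Real.pi : ℂ) * Complex.I)⁻¹) • ∫ θ in (0:ℝ)..(2 * Real.pi), z • (((z - (lam + r * Complex.exp (θ * Complex.I)))⁻¹ * (Complex.I * r * Complex.exp (θ * Complex.I))) • R (lam + r * Complex.exp (θ * Complex.I)) y) := by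
    rw [intervalIntegral.integral_smul]
    exact smul_comm _ _ _
  rw [e1, ← smul_sub, ← intervalIntegral.integral_sub hIg hIzf]
  have e2 : ∀ θ : ℝ, ((z - (lam + r * Complex.exp (θ * Complex.I)))⁻¹ * (Complex.I * r * Complex.exp (θ * Complex.I))) • (y + (lam + r * Complex.exp (θ * Complex.I)) • R (lam + r * Complex.exp (θ * Complex.I)) y) - z • (((z - (lam + r * Complex.exp (θ * Complex.I)))⁻¹ * (Complex.I * r * Complex.exp (θ * Complex.I))) • R (lam + r * Complex.exp (θ * Complex.I)) y) = ((z - (lam + r * Complex.exp (θ * Complex.I)))⁻¹ * (Complex.I * r * Complex.exp (θ * Complex.I))) • y - (Complex.I * r * Complex.exp (θ * Complex.I)) • R (lam + r * Complex.exp (θ * Complex.I)) y := by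
    intro θ
    have h6 : ((z - (lam + r * Complex.exp (θ * Complex.I)))⁻¹ * (Complex.I * r * Complex.exp (θ * Complex.I))) * ((lam + r * Complex.exp (θ * Complex.I)) - z) = -(Complex.I * r * Complex.exp (θ * Complex.I)) := by
      field_simp
      rw [div_eq_iff (hzθ θ)]
      ring
    calc ((z - (lam + r * Complex.exp (θ * Complex.I)))⁻¹ * (Complex.I * r * Complex.exp (θ * Complex.I))) • (y + (lam + r * Complex.exp (θ * Complex.I)) • R (lam + r * Complex.exp (θ * Complex.I)) y) - z • (((z - (lam + r * Complex.exp (θ * Complex.I)))⁻¹ * (Complex.I * r * Complex.exp (θ * Complex.I))) • R (lam + r * Complex.exp (θ * Complex.I)) y)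
        = ((z - (lam + r * Complex.exp (θ * Complex.I)))⁻¹ * (Complex.I * r * Complex.exp (θ * Complex.I))) • y + (((z - (lam + r * Complex.exp (θ * Complex.I)))⁻¹ * (Complex.I * r * Complex.exp (θ * Complex.I))) * ((lam + r * Complex.exp (θ * Complex.I)) - z)) • R (lam + r * Complex.exp (θ * Complex.I)) y := by module
      _ = ((z - (lam + r * Complex.exp (θ * Complex.I)))⁻¹ * (Complex.I * r * Complex.exp (θ * Complex.I))) • y - (Complex.I * r * Complex.exp (θ * Complex.I)) • R (lam + r * Complex.exp (θ * Complex.I)) y := by rw [h6]; module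
  have hcong : (∫ θ in (0:ℝ)..(2 * Real.pi), (((z - (lam + r * Complex.exp (θ * Complex.I)))⁻¹ * (Complex.I * r * Complex.exp (θ * Complex.I))) • (y + (lam + r * Complex.exp (θ * Complex.I)) • R (lam + r * Complex.exp (θ * Complex.I)) y) - z • (((z - (lam + r * Complex.exp (θ * Complex.I)))⁻¹ * (Complex.I * r * Complex.exp (θ * Complex.I))) • R (lam + r * Complex.exp (θ * Complex.I)) y)))
      = ∫ θ in (0:ℝ)..(2 * Real.pi), (((z - (lam + r * Complex.exp (θ * Complex.I)))⁻¹ * (Complex.I * r * Complex.exp (θ * Complex.I))) • y - (Complex.I * r * Complex.exp (θ * Complex.I)) • R (lam + r * Complex.exp (θ * Complex.I)) y) :=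
    intervalIntegral.integral_congr fun θ _ => e2 θ
  rw [hcong, intervalIntegral.integral_sub hIcy hIqw, intervalIntegral.integral_smul_const,
    scalar_integral_inside' (c := lam) (w := z) (R := r) (mem_ball_iff_norm.mpr hz),
    smul_sub, smul_smul]
  have h7 : (-(2 * (Real.pi : ℂ) * Complex.I)⁻¹) * -(2 * (Real.pi : ℂ) * Complex.I) = 1 := by
    have hπ : (Real.pi : ℂ) ≠ 0 := Complex.ofReal_ne_zero.mpr Real.pi_ne_zero
    field_simp
  rw [h7, one_smul, hPrepr]

theorem main3 (A : H →ₗ.[ℂ] H)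
    (lam : ℂ) (r : ℝ) (hr : 0 < r) (R : ℂ → H →L[ℂ] H)
    (hRcont : ContinuousOn R (Metric.sphere lam r))
    (hRinv' : ∀ μ ∈ Metric.sphere lam r, ∀ (x : H) (hx : x ∈ A.domain),
        R μ (A ⟨x, hx⟩ - μ • x) = x)
    (z : ℂ) (hz : ‖z - lam‖ < r) (x : H) (hx : x ∈ A.domain) :
    reducedResolvent R lam r z (A ⟨x, hx⟩ - z • x) = x - rieszProjection R lam r x := by
  have hzθ : ∀ θ : ℝ, z - (lam + r * Complex.exp (θ * Complex.I)) ≠ 0 := z_sub_ne hz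
  have hsphere : ∀ θ : ℝ, (lam + r * Complex.exp (θ * Complex.I)) ∈ Metric.sphere lam r :=
    fun θ => circleMap_mem_sphere lam hr.le θ
  have hrepr := reducedResolvent_apply hr.le hRcont hzθ (A ⟨x, hx⟩ - z • x)
  have hPrepr := rieszProjection_apply hr.le hRcont x
  have hcc : Continuous fun θ : ℝ => ((z - (lam + r * Complex.exp (θ * Complex.I)))⁻¹ * (Complex.I * r * Complex.exp (θ * Complex.I))) :=
    (Continuous.inv₀ (by fun_prop) hzθ).mul (by fun_prop)
  have hcw : Continuous fun θ : ℝ => R (lam + r * Complex.exp (θ * Complex.I)) x :=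
    (contR_comp hr.le hRcont).clm_apply continuous_const
  have hpt : ∀ θ : ℝ, R (lam + r * Complex.exp (θ * Complex.I)) (A ⟨x, hx⟩ - z • x) = x + ((lam + r * Complex.exp (θ * Complex.I)) - z) • R (lam + r * Complex.exp (θ * Complex.I)) x := by
    intro θ
    have h5 := hRinv' _ (hsphere θ) x hx
    have h6 : A ⟨x, hx⟩ - z • x = (A ⟨x, hx⟩ - (lam + r * Complex.exp (θ * Complex.I)) • x) + ((lam + r * Complex.exp (θ * Complex.I)) - z) • x := by module
    rw [h6, map_add, ContinuousLinearMap.map_smul, h5]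
  have e2 : ∀ θ : ℝ, ((z - (lam + r * Complex.exp (θ * Complex.I)))⁻¹ * (Complex.I * r * Complex.exp (θ * Complex.I))) • R (lam + r * Complex.exp (θ * Complex.I)) (A ⟨x, hx⟩ - z • x) = ((z - (lam + r * Complex.exp (θ * Complex.I)))⁻¹ * (Complex.I * r * Complex.exp (θ * Complex.I))) • x - (Complex.I * r * Complex.exp (θ * Complex.I)) • R (lam + r * Complex.exp (θ * Complex.I)) x := by
    intro θ
    have h6 : ((z - (lam + r * Complex.exp (θ * Complex.I)))⁻¹ * (Complex.I * r * Complex.exp (θ * Complex.I))) * ((lam + r * Complex.exp (θ * Complex.I)) - z) = -(Complex.I * r * Complex.exp (θ * Complex.I)) := by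
      field_simp
      rw [div_eq_iff (hzθ θ)]
      ring
    rw [hpt θ]
    calc ((z - (lam + r * Complex.exp (θ * Complex.I)))⁻¹ * (Complex.I * r * Complex.exp (θ * Complex.I))) • (x + ((lam + r * Complex.exp (θ * Complex.I)) - z) • R (lam + r * Complex.exp (θ * Complex.I)) x)
        = ((z - (lam + r * Complex.exp (θ * Complex.I)))⁻¹ * (Complex.I * r * Complex.exp (θ * Complex.I))) • x + (((z - (lam + r * Complex.exp (θ * Complex.I)))⁻¹ * (Complex.I * r * Complex.exp (θ * Complex.I))) * ((lam + r * Complex.exp (θ * Complex.I)) - z)) • R (lam + r * Complex.exp (θ * Complex.I)) x := by module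
      _ = ((z - (lam + r * Complex.exp (θ * Complex.I)))⁻¹ * (Complex.I * r * Complex.exp (θ * Complex.I))) • x - (Complex.I * r * Complex.exp (θ * Complex.I)) • R (lam + r * Complex.exp (θ * Complex.I)) x := by rw [h6]; module
  have hcong : (∫ θ in (0:ℝ)..(2 * Real.pi), ((z - (lam + r * Complex.exp (θ * Complex.I)))⁻¹ * (Complex.I * r * Complex.exp (θ * Complex.I))) • R (lam + r * Complex.exp (θ * Complex.I)) (A ⟨x, hx⟩ - z • x))
      = ∫ θ in (0:ℝ)..(2 * Real.pi), (((z - (lam + r * Complex.exp (θ * Complex.I)))⁻¹ * (Complex.I * r * Complex.exp (θ * Complex.I))) • x - (Complex.I * r * Complex.exp (θ * Complex.I)) • R (lam + r * Complex.exp (θ * Complex.I)) x) :=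
    intervalIntegral.integral_congr fun θ _ => e2 θ
  have hIcx : IntervalIntegrable (fun θ : ℝ => ((z - (lam + r * Complex.exp (θ * Complex.I)))⁻¹ * (Complex.I * r * Complex.exp (θ * Complex.I))) • x) volume 0 (2 * Real.pi) :=
    (hcc.smul continuous_const).intervalIntegrable _ _
  have hIqw : IntervalIntegrable (fun θ : ℝ => (Complex.I * r * Complex.exp (θ * Complex.I)) • R (lam + r * Complex.exp (θ * Complex.I)) x) volume 0 (2 * Real.pi) :=
    ((by fun_prop : Continuous fun θ : ℝ => (Complex.I * r * Complex.exp (θ * Complex.I))).smul hcw).intervalIntegrable _ _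
  rw [hrepr, hcong, intervalIntegral.integral_sub hIcx hIqw,
    intervalIntegral.integral_smul_const,
    scalar_integral_inside' (c := lam) (w := z) (R := r) (mem_ball_iff_norm.mpr hz),
    smul_sub, smul_smul]
  have h7 : (-(2 * (Real.pi : ℂ) * Complex.I)⁻¹) * -(2 * (Real.pi : ℂ) * Complex.I) = 1 := by
    have hπ : (Real.pi : ℂ) ≠ 0 := Complex.ofReal_ne_zero.mpr Real.pi_ne_zero
    field_simp
  rw [h7, one_smul, hPrepr]

end Chunk5


section Chunk6

open Complex intervalIntegral MeasureTheory

variable {H : Type*} [NormedAddCommGroup H] [InnerProductSpace ℂ H] [CompleteSpace H]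

set_option maxHeartbeats 1000000 in
theorem main4 (A : H →ₗ.[ℂ] H) (hclosed : IsClosed (A.graph : Set (H × H)))
    (lam : ℂ) (r : ℝ) (hr : 0 < r) (R : ℂ → H →L[ℂ] H)
    (hRcont : ContinuousOn R (Metric.sphere lam r))
    (hRmem : ∀ μ ∈ Metric.sphere lam r, ∀ y : H, R μ y ∈ A.domain)
    (hRinv : ∀ μ ∈ Metric.sphere lam r, ∀ (y : H) (h : R μ y ∈ A.domain),
        A ⟨R μ y, h⟩ - μ • R μ y = y)
    (hRinv' : ∀ μ ∈ Metric.sphere lam r, ∀ (x : H) (hx : x ∈ A.domain),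
        R μ (A ⟨x, hx⟩ - μ • x) = x)
    (z : ℂ) (hz : ‖z - lam‖ < r) (y : H) :
    rieszProjection R lam r (reducedResolvent R lam r z y) = 0 := by
  have hIs : ∀ μ ∈ Metric.sphere lam r, IsRes A μ (R μ) :=
    fun μ hμ => ⟨hRmem μ hμ, hRinv μ hμ, hRinv' μ hμ⟩
  obtain ⟨M₀, hM₀⟩ := (isCompact_sphere lam r).exists_bound_of_continuousOn hRcont
  set M : ℝ := max M₀ 0 with hM_def
  have hM0 : 0 ≤ M := le_max_right _ _
  have hM : ∀ μ ∈ Metric.sphere lam r, ‖R μ‖ ≤ M := fun μ hμ => (hM₀ μ hμ).trans (le_max_left _ _)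
  set ε : ℝ := min (r / 2) (M + 1)⁻¹ with hε_def
  have hε0 : 0 < ε := lt_min (by linarith) (by positivity)
  have hεr : ε ≤ r / 2 := min_le_left _ _
  have hεM : ε ≤ (M + 1)⁻¹ := min_le_right _ _
  -- existence of a resolvent near the circle
  have hExists : ∀ μ : ℂ, |‖μ - lam‖ - r| < ε → ∃ T, IsRes A μ T := by
    intro μ hμ
    rw [abs_sub_lt_iff] at hμ
    have ha_pos : 0 < ‖μ - lam‖ := by linarith [hμ.2]
    set a : ℝ := ‖μ - lam‖ with ha_def
    set μ₀ : ℂ := lam + ((r / a : ℝ) : ℂ) * (μ - lam) with hμ₀_def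
    have hμ₀_sphere : μ₀ ∈ Metric.sphere lam r := by
      rw [mem_sphere_iff_norm]
      have h1 : μ₀ - lam = ((r / a : ℝ) : ℂ) * (μ - lam) := by rw [hμ₀_def]; ring
      rw [h1]
      rw [norm_mul]
      have h2 : ‖((r / a : ℝ) : ℂ)‖ = r / a := by
        rw [Complex.norm_real, Real.norm_eq_abs, abs_of_pos (by positivity)]
      rw [h2]
      have h3 : ‖μ - lam‖ = a := rfl
      rw [h3]
      field_simp
    have hdiff : ‖μ - μ₀‖ = |a - r| := by
      have h1 : μ - μ₀ = ((1 : ℂ) - ((r / a : ℝ) : ℂ)) * (μ - lam) := by rw [hμ₀_def]; ring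
      rw [h1, norm_mul]
      have h2 : ‖(1 : ℂ) - ((r / a : ℝ) : ℂ)‖ = |1 - r / a| := by
        rw [show (1 : ℂ) - ((r / a : ℝ) : ℂ) = (((1 - r / a : ℝ)) : ℂ) by push_cast; ring]
        rw [Complex.norm_real, Real.norm_eq_abs]
      rw [h2]
      have h3 : ‖μ - lam‖ = a := rfl
      rw [h3]
      rw [show (1 : ℝ) - r / a = (a - r) / a by field_simp]
      rw [abs_div, abs_of_pos ha_pos, div_mul_cancel₀ _ (ne_of_gt ha_pos)]
    have hT := hIs μ₀ hμ₀_sphere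
    have hnorm : ‖(μ - μ₀) • R μ₀‖ < 1 := by
      rw [norm_smul]
      have h1 : ‖μ - μ₀‖ = |a - r| := hdiff
      have h2 : ‖R μ₀‖ ≤ M := hM μ₀ hμ₀_sphere
      have h3 : |a - r| < ε := abs_sub_lt_iff.mpr hμ
      have h4 : (M + 1)⁻¹ * (M + 1) = 1 := inv_mul_cancel₀ (by positivity)
      have h5 : ‖μ - μ₀‖ < (M + 1)⁻¹ := by rw [h1]; linarith
      nlinarith [norm_nonneg (μ - μ₀), norm_nonneg (R μ₀)]
    exact ⟨_, hT.extend hnorm⟩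
  have hdiffAt : ∀ μ : ℂ, r - ε < ‖μ - lam‖ → ‖μ - lam‖ < r + ε →
      DifferentiableAt ℂ (Rext A) μ := fun μ h1 h2 =>
    Rext_diffAt (hExists μ (abs_sub_lt_iff.mpr ⟨by linarith, by linarith⟩))
  -- choice of the smaller radius
  set rp : ℝ := max (r - ε / 2) ((‖z - lam‖ + r) / 2) with hrp_def
  have hrpr : rp < r := max_lt (by linarith) (by linarith)
  have hrp0 : 0 < rp := lt_of_lt_of_le (by linarith) (le_max_left _ _)
  have hzrp : ‖z - lam‖ < rp := lt_of_lt_of_le (by linarith) (le_max_right _ _)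
  have hεrp : r - ε < rp := lt_of_lt_of_le (by linarith) (le_max_left _ _)
  -- contour deformation
  have hannulus : (∮ μ in C(lam, r), Rext A μ) = ∮ μ in C(lam, rp), Rext A μ := by
    refine circleIntegral_eq_of_differentiable_on_annulus_off_countable hrp0 hrpr.le
      Set.countable_empty ?_ ?_
    · intro μ hμ
      obtain ⟨h1, h2⟩ := hμ
      rw [Metric.mem_closedBall, Complex.dist_eq] at h1
      rw [Metric.mem_ball, Complex.dist_eq, not_lt] at h2
      exact (hdiffAt μ (by linarith) (by linarith)).continuousAt.continuousWithinAt
    · intro μ hμ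
      obtain ⟨⟨h1, h2⟩, -⟩ := hμ
      rw [Metric.mem_ball, Complex.dist_eq] at h1
      rw [Metric.mem_closedBall, Complex.dist_eq, not_le] at h2
      exact hdiffAt μ (by linarith) (by linarith)
  have habs' : ∀ φ : ℝ, ‖(lam + rp * Complex.exp (φ * Complex.I)) - lam‖ = rp := by
    intro φ
    have := mem_sphere_iff_norm.mp (circleMap_mem_sphere lam hrp0.le φ)
    simpa [circleMap] using this
  have hcRext' : Continuous fun φ : ℝ => Rext A (lam + rp * Complex.exp (φ * Complex.I)) := by
    rw [continuous_iff_continuousAt]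
    intro φ
    have h1 : Continuous fun φ : ℝ => (lam + rp * Complex.exp (φ * Complex.I)) := by fun_prop
    exact ContinuousAt.comp
      ((hdiffAt _ (by rw [habs' φ]; linarith) (by rw [habs' φ]; linarith)).continuousAt)
      h1.continuousAt
  -- operator-level identity between the two contours
  have hintR : IntervalIntegrable (fun θ : ℝ => (Complex.I * r * Complex.exp (θ * Complex.I)) • R (lam + r * Complex.exp (θ * Complex.I))) volume 0 (2 * Real.pi) :=
    (Continuous.smul (by fun_prop : Continuous fun θ : ℝ => Complex.I * ↑r * Complex.exp (↑θ * Complex.I)) (contR_comp hr.le hRcont)).intervalIntegrable _ _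
  have hintX : IntervalIntegrable (fun φ : ℝ => (Complex.I * rp * Complex.exp (φ * Complex.I)) • Rext A (lam + rp * Complex.exp (φ * Complex.I))) volume 0 (2 * Real.pi) :=
    (Continuous.smul (by fun_prop : Continuous fun φ : ℝ => Complex.I * ↑rp * Complex.exp (↑φ * Complex.I)) hcRext').intervalIntegrable _ _
  have hop : (∫ θ in (0:ℝ)..(2 * Real.pi), (Complex.I * r * Complex.exp (θ * Complex.I)) • R (lam + r * Complex.exp (θ * Complex.I)))
      = ∫ φ in (0:ℝ)..(2 * Real.pi), (Complex.I * rp * Complex.exp (φ * Complex.I)) • Rext A (lam + rp * Complex.exp (φ * Complex.I)) := by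
    calc (∫ θ in (0:ℝ)..(2 * Real.pi), (Complex.I * r * Complex.exp (θ * Complex.I)) • R (lam + r * Complex.exp (θ * Complex.I)))
        = ∮ μ in C(lam, r), R μ := (circleIntegral_eq_intervalIntegral R lam r).symm
      _ = ∮ μ in C(lam, r), Rext A μ :=
          circleIntegral.integral_congr hr.le (fun μ hμ => (Rext_eq (hIs μ hμ)).symm)
      _ = ∮ μ in C(lam, rp), Rext A μ := hannulus
      _ = ∫ φ in (0:ℝ)..(2 * Real.pi), (Complex.I * rp * Complex.exp (φ * Complex.I)) • Rext A (lam + rp * Complex.exp (φ * Complex.I)) :=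
          circleIntegral_eq_intervalIntegral (Rext A) lam rp
  -- P written as an integral over the smaller circle
  have hPP : ∀ v : H, rieszProjection R lam r v
      = (-(2 * (Real.pi : ℂ) * Complex.I)⁻¹) • ∫ φ in (0:ℝ)..(2 * Real.pi), (Complex.I * rp * Complex.exp (φ * Complex.I)) • (Rext A (lam + rp * Complex.exp (φ * Complex.I)) v) := by
    intro v
    rw [rieszProjection_apply hr.le hRcont v]
    congr 1
    calc (∫ θ in (0:ℝ)..(2 * Real.pi), (Complex.I * r * Complex.exp (θ * Complex.I)) • (R (lam + r * Complex.exp (θ * Complex.I)) v))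
        = (∫ θ in (0:ℝ)..(2 * Real.pi), (Complex.I * r * Complex.exp (θ * Complex.I)) • R (lam + r * Complex.exp (θ * Complex.I))) v := by
          rw [ContinuousLinearMap.intervalIntegral_apply hintR]
          exact intervalIntegral.integral_congr fun θ _ => rfl
      _ = (∫ φ in (0:ℝ)..(2 * Real.pi), (Complex.I * rp * Complex.exp (φ * Complex.I)) • Rext A (lam + rp * Complex.exp (φ * Complex.I))) v := by rw [hop]
      _ = ∫ φ in (0:ℝ)..(2 * Real.pi), (Complex.I * rp * Complex.exp (φ * Complex.I)) • (Rext A (lam + rp * Complex.exp (φ * Complex.I)) v) := by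
          rw [ContinuousLinearMap.intervalIntegral_apply hintX]
          exact intervalIntegral.integral_congr fun φ _ => rfl
  -- basic θ-side facts
  have hzθ : ∀ θ : ℝ, z - (lam + r * Complex.exp (θ * Complex.I)) ≠ 0 := z_sub_ne hz
  have hsphere : ∀ θ : ℝ, (lam + r * Complex.exp (θ * Complex.I)) ∈ Metric.sphere lam r :=
    fun θ => circleMap_mem_sphere lam hr.le θ
  have habs : ∀ θ : ℝ, ‖(lam + r * Complex.exp (θ * Complex.I)) - lam‖ = r := by
    intro θ
    simpa [circleMap] using mem_sphere_iff_norm.mp (hsphere θ)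
  have hνν' : ∀ (θ φ : ℝ), (lam + r * Complex.exp (θ * Complex.I)) - (lam + rp * Complex.exp (φ * Complex.I)) ≠ 0 := by
    intro θ φ
    exact point_ne_circleMap hr.le
      (by rw [show ‖(lam + rp * Complex.exp (φ * Complex.I)) - lam‖ = rp from habs' φ]; exact ne_of_lt hrpr) θ
  have hzNUP : ∀ φ : ℝ, z ≠ (lam + rp * Complex.exp (φ * Complex.I)) := by
    intro φ h
    have h2 := habs' φ
    rw [← h] at h2
    exact absurd h2 (ne_of_lt hzrp)
  have hcw : Continuous fun θ : ℝ => R (lam + r * Complex.exp (θ * Complex.I)) y :=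
    (contR_comp hr.le hRcont).clm_apply continuous_const
  have hcc : Continuous fun θ : ℝ => ((z - (lam + r * Complex.exp (θ * Complex.I)))⁻¹ * (Complex.I * r * Complex.exp (θ * Complex.I))) :=
    (Continuous.inv₀ (by fun_prop) hzθ).mul (by fun_prop)
  have hIf : IntervalIntegrable (fun θ : ℝ => ((z - (lam + r * Complex.exp (θ * Complex.I)))⁻¹ * (Complex.I * r * Complex.exp (θ * Complex.I))) • R (lam + r * Complex.exp (θ * Complex.I)) y) volume 0 (2 * Real.pi) :=
    (hcc.smul hcw).intervalIntegrable _ _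
  have hKcont : ∀ φ : ℝ, Continuous fun θ : ℝ => (((z - (lam + r * Complex.exp (θ * Complex.I)))⁻¹ * (Complex.I * r * Complex.exp (θ * Complex.I))) * ((lam + r * Complex.exp (θ * Complex.I)) - (lam + rp * Complex.exp (φ * Complex.I)))⁻¹) :=
    fun φ => hcc.mul (Continuous.inv₀ (by fun_prop) (fun θ => hνν' θ φ))
  -- scalar vanishing in θ
  have hscalθ : ∀ φ : ℝ, (∫ θ in (0:ℝ)..(2 * Real.pi), (((z - (lam + r * Complex.exp (θ * Complex.I)))⁻¹ * (Complex.I * r * Complex.exp (θ * Complex.I))) * ((lam + r * Complex.exp (θ * Complex.I)) - (lam + rp * Complex.exp (φ * Complex.I)))⁻¹)) = 0 := by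
    intro φ
    have h2p := scalar_integral_two_poles (c := lam) (z := z) (w := (lam + rp * Complex.exp (φ * Complex.I))) (R := r) hr
      (mem_ball_iff_norm.mpr hz)
      (by rw [mem_ball_iff_norm, show ‖(lam + rp * Complex.exp (φ * Complex.I)) - lam‖ = rp from habs' φ]; exact hrpr)
      (hzNUP φ)
    rw [← h2p]
    exact intervalIntegral.integral_congr fun θ _ => by ring
  -- the key pointwise identity on the small circle
  have hinner : ∀ φ : ℝ, Rext A (lam + rp * Complex.exp (φ * Complex.I)) (reducedResolvent R lam r z y)
      = (-(2 * (Real.pi : ℂ) * Complex.I)⁻¹) • ∫ θ in (0:ℝ)..(2 * Real.pi), (((z - (lam + r * Complex.exp (θ * Complex.I)))⁻¹ * (Complex.I * r * Complex.exp (θ * Complex.I))) * ((lam + r * Complex.exp (θ * Complex.I)) - (lam + rp * Complex.exp (φ * Complex.I)))⁻¹) • (R (lam + r * Complex.exp (θ * Complex.I)) y) := by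
    intro φ
    have hTφ : IsRes A (lam + rp * Complex.exp (φ * Complex.I)) (Rext A (lam + rp * Complex.exp (φ * Complex.I))) :=
      Rext_isRes (hExists _ (by rw [habs' φ, abs_sub_lt_iff]; constructor <;> linarith))
    rw [reducedResolvent_apply hr.le hRcont hzθ y, ContinuousLinearMap.map_smul]
    congr 1
    rw [← ContinuousLinearMap.intervalIntegral_comp_comm _ hIf]
    have hres : ∀ θ : ℝ, Rext A (lam + rp * Complex.exp (φ * Complex.I)) (((z - (lam + r * Complex.exp (θ * Complex.I)))⁻¹ * (Complex.I * r * Complex.exp (θ * Complex.I))) • (R (lam + r * Complex.exp (θ * Complex.I)) y))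
        = (((z - (lam + r * Complex.exp (θ * Complex.I)))⁻¹ * (Complex.I * r * Complex.exp (θ * Complex.I))) * ((lam + r * Complex.exp (θ * Complex.I)) - (lam + rp * Complex.exp (φ * Complex.I)))⁻¹) • (R (lam + r * Complex.exp (θ * Complex.I)) y) - (((z - (lam + r * Complex.exp (θ * Complex.I)))⁻¹ * (Complex.I * r * Complex.exp (θ * Complex.I))) * ((lam + r * Complex.exp (θ * Complex.I)) - (lam + rp * Complex.exp (φ * Complex.I)))⁻¹) • (Rext A (lam + rp * Complex.exp (φ * Complex.I)) y) := by
      intro θ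
      rw [ContinuousLinearMap.map_smul,
        IsRes.res_id hTφ (hIs _ (hsphere θ)) (fun h => hνν' θ φ (by rw [h, sub_self])) y,
        smul_smul, smul_sub]
    have hIK1 : IntervalIntegrable (fun θ : ℝ => (((z - (lam + r * Complex.exp (θ * Complex.I)))⁻¹ * (Complex.I * r * Complex.exp (θ * Complex.I))) * ((lam + r * Complex.exp (θ * Complex.I)) - (lam + rp * Complex.exp (φ * Complex.I)))⁻¹) • (R (lam + r * Complex.exp (θ * Complex.I)) y)) volume 0 (2 * Real.pi) :=
      ((hKcont φ).smul hcw).intervalIntegrable _ _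
    have hIK2 : IntervalIntegrable (fun θ : ℝ => (((z - (lam + r * Complex.exp (θ * Complex.I)))⁻¹ * (Complex.I * r * Complex.exp (θ * Complex.I))) * ((lam + r * Complex.exp (θ * Complex.I)) - (lam + rp * Complex.exp (φ * Complex.I)))⁻¹) • (Rext A (lam + rp * Complex.exp (φ * Complex.I)) y)) volume 0 (2 * Real.pi) :=
      ((hKcont φ).smul continuous_const).intervalIntegrable _ _
    calc (∫ θ in (0:ℝ)..(2 * Real.pi), Rext A (lam + rp * Complex.exp (φ * Complex.I)) (((z - (lam + r * Complex.exp (θ * Complex.I)))⁻¹ * (Complex.I * r * Complex.exp (θ * Complex.I))) • (R (lam + r * Complex.exp (θ * Complex.I)) y)))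
        = ∫ θ in (0:ℝ)..(2 * Real.pi), ((((z - (lam + r * Complex.exp (θ * Complex.I)))⁻¹ * (Complex.I * r * Complex.exp (θ * Complex.I))) * ((lam + r * Complex.exp (θ * Complex.I)) - (lam + rp * Complex.exp (φ * Complex.I)))⁻¹) • (R (lam + r * Complex.exp (θ * Complex.I)) y) - (((z - (lam + r * Complex.exp (θ * Complex.I)))⁻¹ * (Complex.I * r * Complex.exp (θ * Complex.I))) * ((lam + r * Complex.exp (θ * Complex.I)) - (lam + rp * Complex.exp (φ * Complex.I)))⁻¹) • (Rext A (lam + rp * Complex.exp (φ * Complex.I)) y)) :=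
          intervalIntegral.integral_congr fun θ _ => hres θ
      _ = (∫ θ in (0:ℝ)..(2 * Real.pi), (((z - (lam + r * Complex.exp (θ * Complex.I)))⁻¹ * (Complex.I * r * Complex.exp (θ * Complex.I))) * ((lam + r * Complex.exp (θ * Complex.I)) - (lam + rp * Complex.exp (φ * Complex.I)))⁻¹) • (R (lam + r * Complex.exp (θ * Complex.I)) y))
            - (∫ θ in (0:ℝ)..(2 * Real.pi), (((z - (lam + r * Complex.exp (θ * Complex.I)))⁻¹ * (Complex.I * r * Complex.exp (θ * Complex.I))) * ((lam + r * Complex.exp (θ * Complex.I)) - (lam + rp * Complex.exp (φ * Complex.I)))⁻¹)) • Rext A (lam + rp * Complex.exp (φ * Complex.I)) y := by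
          rw [intervalIntegral.integral_sub hIK1 hIK2, intervalIntegral.integral_smul_const]
      _ = ∫ θ in (0:ℝ)..(2 * Real.pi), (((z - (lam + r * Complex.exp (θ * Complex.I)))⁻¹ * (Complex.I * r * Complex.exp (θ * Complex.I))) * ((lam + r * Complex.exp (θ * Complex.I)) - (lam + rp * Complex.exp (φ * Complex.I)))⁻¹) • (R (lam + r * Complex.exp (θ * Complex.I)) y) := by
          rw [hscalθ φ, zero_smul, sub_zero]
  -- assemble
  rw [hPP (reducedResolvent R lam r z y)]
  have hstep : ∀ φ : ℝ, (Complex.I * rp * Complex.exp (φ * Complex.I)) • (Rext A (lam + rp * Complex.exp (φ * Complex.I)) (reducedResolvent R lam r z y))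
      = (-(2 * (Real.pi : ℂ) * Complex.I)⁻¹) • ∫ θ in (0:ℝ)..(2 * Real.pi), (((Complex.I * rp * Complex.exp (φ * Complex.I)) * (((z - (lam + r * Complex.exp (θ * Complex.I)))⁻¹ * (Complex.I * r * Complex.exp (θ * Complex.I))) * ((lam + r * Complex.exp (θ * Complex.I)) - (lam + rp * Complex.exp (φ * Complex.I)))⁻¹)) • (R (lam + r * Complex.exp (θ * Complex.I)) y)) := by
    intro φ
    rw [hinner φ, smul_comm ((Complex.I * rp * Complex.exp (φ * Complex.I))) (-(2 * (Real.pi : ℂ) * Complex.I)⁻¹), ← intervalIntegral.integral_smul]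
    congr 1
    exact intervalIntegral.integral_congr fun θ _ => smul_smul _ _ _
  have hcongφ : (∫ φ in (0:ℝ)..(2 * Real.pi), (Complex.I * rp * Complex.exp (φ * Complex.I)) • (Rext A (lam + rp * Complex.exp (φ * Complex.I)) (reducedResolvent R lam r z y)))
      = ∫ φ in (0:ℝ)..(2 * Real.pi), (-(2 * (Real.pi : ℂ) * Complex.I)⁻¹) • ∫ θ in (0:ℝ)..(2 * Real.pi), (((Complex.I * rp * Complex.exp (φ * Complex.I)) * (((z - (lam + r * Complex.exp (θ * Complex.I)))⁻¹ * (Complex.I * r * Complex.exp (θ * Complex.I))) * ((lam + r * Complex.exp (θ * Complex.I)) - (lam + rp * Complex.exp (φ * Complex.I)))⁻¹)) • (R (lam + r * Complex.exp (θ * Complex.I)) y)) :=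
    intervalIntegral.integral_congr fun φ _ => hstep φ
  rw [hcongφ, intervalIntegral.integral_smul]
  -- the double integral vanishes
  have hj1 : Continuous fun p : ℝ × ℝ => (z - (lam + r * Complex.exp (p.2 * Complex.I)))⁻¹ :=
    Continuous.inv₀ (by fun_prop) fun p => hzθ p.2
  have hj2 : Continuous fun p : ℝ × ℝ => ((lam + r * Complex.exp (p.2 * Complex.I)) - (lam + rp * Complex.exp (p.1 * Complex.I)))⁻¹ :=
    Continuous.inv₀ (by fun_prop) fun p => hνν' p.2 p.1
  have hj3 : Continuous fun p : ℝ × ℝ => R (lam + r * Complex.exp (p.2 * Complex.I)) y :=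
    Continuous.clm_apply ((contR_comp hr.le hRcont).comp
      (continuous_snd : Continuous fun p : ℝ × ℝ => p.2)) continuous_const
  have hFcont : Continuous fun p : ℝ × ℝ => (((Complex.I * rp * Complex.exp (p.1 * Complex.I)) * (((z - (lam + r * Complex.exp (p.2 * Complex.I)))⁻¹ * (Complex.I * r * Complex.exp (p.2 * Complex.I))) * ((lam + r * Complex.exp (p.2 * Complex.I)) - (lam + rp * Complex.exp (p.1 * Complex.I)))⁻¹)) • R (lam + r * Complex.exp (p.2 * Complex.I)) y) :=
    Continuous.smul (Continuous.mul (by fun_prop)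
      (Continuous.mul (Continuous.mul hj1 (by fun_prop)) hj2)) hj3
  have hInt2 : MeasureTheory.Integrable
      (Function.uncurry fun (φ θ : ℝ) => (((Complex.I * rp * Complex.exp (φ * Complex.I)) * (((z - (lam + r * Complex.exp (θ * Complex.I)))⁻¹ * (Complex.I * r * Complex.exp (θ * Complex.I))) * ((lam + r * Complex.exp (θ * Complex.I)) - (lam + rp * Complex.exp (φ * Complex.I)))⁻¹)) • (R (lam + r * Complex.exp (θ * Complex.I)) y)))
      ((volume.restrict (Set.Ioc 0 (2 * Real.pi))).prod (volume.restrict (Set.Ioc 0 (2 * Real.pi)))) := by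
    rw [Measure.prod_restrict]
    refine MeasureTheory.IntegrableOn.mono_set ?_
      (Set.prod_mono Set.Ioc_subset_Icc_self Set.Ioc_subset_Icc_self)
    exact hFcont.continuousOn.integrableOn_compact (isCompact_Icc.prod isCompact_Icc)
  have hswap : (∫ φ in (0:ℝ)..(2 * Real.pi), ∫ θ in (0:ℝ)..(2 * Real.pi), (((Complex.I * rp * Complex.exp (φ * Complex.I)) * (((z - (lam + r * Complex.exp (θ * Complex.I)))⁻¹ * (Complex.I * r * Complex.exp (θ * Complex.I))) * ((lam + r * Complex.exp (θ * Complex.I)) - (lam + rp * Complex.exp (φ * Complex.I)))⁻¹)) • (R (lam + r * Complex.exp (θ * Complex.I)) y)))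
      = ∫ θ in (0:ℝ)..(2 * Real.pi), ∫ φ in (0:ℝ)..(2 * Real.pi), (((Complex.I * rp * Complex.exp (φ * Complex.I)) * (((z - (lam + r * Complex.exp (θ * Complex.I)))⁻¹ * (Complex.I * r * Complex.exp (θ * Complex.I))) * ((lam + r * Complex.exp (θ * Complex.I)) - (lam + rp * Complex.exp (φ * Complex.I)))⁻¹)) • (R (lam + r * Complex.exp (θ * Complex.I)) y)) := by
    simp only [intervalIntegral.integral_of_le Real.two_pi_pos.le]
    exact MeasureTheory.integral_integral_swap hInt2
  have hinnerφ : ∀ θ : ℝ, (∫ φ in (0:ℝ)..(2 * Real.pi), (((Complex.I * rp * Complex.exp (φ * Complex.I)) * (((z - (lam + r * Complex.exp (θ * Complex.I)))⁻¹ * (Complex.I * r * Complex.exp (θ * Complex.I))) * ((lam + r * Complex.exp (θ * Complex.I)) - (lam + rp * Complex.exp (φ * Complex.I)))⁻¹)) • (R (lam + r * Complex.exp (θ * Complex.I)) y))) = 0 := by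
    intro θ
    rw [intervalIntegral.integral_smul_const]
    have hout : (lam + r * Complex.exp (θ * Complex.I)) ∉ Metric.closedBall lam rp := by
      rw [Metric.mem_closedBall, Complex.dist_eq, habs θ]
      exact not_le.mpr hrpr
    have h0 : (∫ φ in (0:ℝ)..(2 * Real.pi), (((lam + rp * Complex.exp (φ * Complex.I)) - (lam + r * Complex.exp (θ * Complex.I)))⁻¹ * (Complex.I * rp * Complex.exp (φ * Complex.I)))) = 0 :=
      scalar_integral_outside hrp0.le hout
    have hscal : (∫ φ in (0:ℝ)..(2 * Real.pi), ((Complex.I * rp * Complex.exp (φ * Complex.I)) * (((z - (lam + r * Complex.exp (θ * Complex.I)))⁻¹ * (Complex.I * r * Complex.exp (θ * Complex.I))) * ((lam + r * Complex.exp (θ * Complex.I)) - (lam + rp * Complex.exp (φ * Complex.I)))⁻¹))) = 0 := by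
      calc (∫ φ in (0:ℝ)..(2 * Real.pi), ((Complex.I * rp * Complex.exp (φ * Complex.I)) * (((z - (lam + r * Complex.exp (θ * Complex.I)))⁻¹ * (Complex.I * r * Complex.exp (θ * Complex.I))) * ((lam + r * Complex.exp (θ * Complex.I)) - (lam + rp * Complex.exp (φ * Complex.I)))⁻¹)))
          = ∫ φ in (0:ℝ)..(2 * Real.pi), (-((z - (lam + r * Complex.exp (θ * Complex.I)))⁻¹ * (Complex.I * r * Complex.exp (θ * Complex.I)))) * (((lam + rp * Complex.exp (φ * Complex.I)) - (lam + r * Complex.exp (θ * Complex.I)))⁻¹ * (Complex.I * rp * Complex.exp (φ * Complex.I))) :=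
            intervalIntegral.integral_congr fun φ _ => by
              rw [show ((lam + r * Complex.exp (θ * Complex.I)) - (lam + rp * Complex.exp (φ * Complex.I))) = -((lam + rp * Complex.exp (φ * Complex.I)) - (lam + r * Complex.exp (θ * Complex.I))) by ring, inv_neg]; ring
        _ = (-((z - (lam + r * Complex.exp (θ * Complex.I)))⁻¹ * (Complex.I * r * Complex.exp (θ * Complex.I)))) * ∫ φ in (0:ℝ)..(2 * Real.pi), (((lam + rp * Complex.exp (φ * Complex.I)) - (lam + r * Complex.exp (θ * Complex.I)))⁻¹ * (Complex.I * rp * Complex.exp (φ * Complex.I))) :=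
            intervalIntegral.integral_const_mul _ _
        _ = 0 := by rw [h0, mul_zero]
    rw [hscal, zero_smul]
  have hzero : (∫ φ in (0:ℝ)..(2 * Real.pi), ∫ θ in (0:ℝ)..(2 * Real.pi), (((Complex.I * rp * Complex.exp (φ * Complex.I)) * (((z - (lam + r * Complex.exp (θ * Complex.I)))⁻¹ * (Complex.I * r * Complex.exp (θ * Complex.I))) * ((lam + r * Complex.exp (θ * Complex.I)) - (lam + rp * Complex.exp (φ * Complex.I)))⁻¹)) • (R (lam + r * Complex.exp (θ * Complex.I)) y))) = 0 := by
    rw [hswap]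
    rw [intervalIntegral.integral_congr (g := fun _ : ℝ => (0:H)) fun θ _ => hinnerφ θ]
    exact intervalIntegral.integral_zero
  rw [hzero, smul_zero, smul_zero]


end Chunk6

end RRProof

/-- Let `A` be a closed operator with the circle `{|μ-λ| = r}` in its resolvent set, `P` the
associated Riesz projection and `P̄ = 1 - P`.  For `|z-λ| < r`, the operator `A - z`
restricted to `Ran P̄ ∩ D(A)` is invertible with inverse (composed with `P̄`) given by the
reduced resolvent `R̂_z`: one has `(A-z) R̂_z = P̄`, `R̂_z (A-z) ⊆ P̄`, and
`R̂_z P = P R̂_z = 0`. -/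
theorem reduced_resolvent_inverse {H : Type*} [NormedAddCommGroup H]
    [InnerProductSpace ℂ H] [CompleteSpace H]
    (A : H →ₗ.[ℂ] H) (hclosed : IsClosed (A.graph : Set (H × H)))
    (lam : ℂ) (r : ℝ) (hr : 0 < r)
    (R : ℂ → H →L[ℂ] H)
    (hRcont : ContinuousOn R (Metric.sphere lam r))
    (hRmem : ∀ μ ∈ Metric.sphere lam r, ∀ y : H, R μ y ∈ A.domain)
    (hRinv : ∀ μ ∈ Metric.sphere lam r, ∀ (y : H) (h : R μ y ∈ A.domain),
        A ⟨R μ y, h⟩ - μ • R μ y = y)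
    (hRinv' : ∀ μ ∈ Metric.sphere lam r, ∀ (x : H) (hx : x ∈ A.domain),
        R μ (A ⟨x, hx⟩ - μ • x) = x)
    (z : ℂ) (hz : ‖z - lam‖ < r) :
    (∀ y : H, reducedResolvent R lam r z y ∈ A.domain) ∧
    (∀ (y : H) (h : reducedResolvent R lam r z y ∈ A.domain),
        A ⟨reducedResolvent R lam r z y, h⟩ - z • reducedResolvent R lam r z y =
          y - rieszProjection R lam r y) ∧
    (∀ (x : H) (hx : x ∈ A.domain),
        reducedResolvent R lam r z (A ⟨x, hx⟩ - z • x) = x - rieszProjection R lam r x) ∧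
    (∀ y : H, reducedResolvent R lam r z (rieszProjection R lam r y) = 0 ∧
        rieszProjection R lam r (reducedResolvent R lam r z y) = 0) := by
  have h12 := fun y => RRProof.main12 A hclosed lam r hr R hRcont hRmem hRinv z hz y
  have h3 := fun x hx => RRProof.main3 A lam r hr R hRcont hRinv' z hz x hx
  have h4 := fun y => RRProof.main4 A hclosed lam r hr R hRcont hRmem hRinv hRinv' z hz y
  refine ⟨fun y => (h12 y).1, fun y h => ?_, h3, fun y => ⟨?_, h4 y⟩⟩
  · obtain ⟨h', heq⟩ := h12 y
    exact heq
  · obtain ⟨h', heq⟩ := h12 y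
    have h3' := h3 (reducedResolvent R lam r z y) h'
    rw [heq, map_sub] at h3'
    have hcomm : reducedResolvent R lam r z (rieszProjection R lam r y)
        = rieszProjection R lam r (reducedResolvent R lam r z y) := sub_right_injective h3'
    rw [hcomm, h4 y]
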